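/- Let A ⊆ ℝ² be a down-closed convex set (if a ∈ A and b ≤ a coordinatewise then b ∈ A) such that for each coordinate direction the supremum is attained. Then for any family of point-pairs: sup_{(a₁,a₂) ∈ A} min_{α∈[0,1]} (α a₁ + (1−α) a₂) = min_{α∈[0,1]} sup_{(a₁,a₂)∈A} (α a₁ + (1−α) a₂), i.e., min and sup can be interchanged for linear functionals indexed by the 1-simplex over a convex constraint set. -/

import Mathlib

/-- Evaluation of a continuous linear functional on `ℝ × ℝ` via its values on the basis. -/
lemma clm_eval_R2 (f : (ℝ × ℝ) →L[ℝ] ℝ) (p : ℝ × ℝ) :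
    f p = p.1 * f (1, 0) + p.2 * f (0, 1) := by
  obtain ⟨x, y⟩ := p
  have h : ((x, y) : ℝ × ℝ) = x • ((1 : ℝ), (0 : ℝ)) + y • ((0 : ℝ), (1 : ℝ)) := by
    ext <;> simp
  rw [h, map_add, map_smul, map_smul, smul_eq_mul, smul_eq_mul]
  simp

/-- Min–max interchange over a down-closed convex subset of `ℝ²` whose coordinatewise suprema
are attained: the sup of the min of the coordinates equals the min over the simplex of the
sup of the corresponding linear functional. -/
theorem minimax_interchange_R2
    (A : Set (ℝ × ℝ)) (hne : A.Nonempty) (hconv : Convex ℝ A)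
    (hdown : ∀ a ∈ A, ∀ b : ℝ × ℝ, b.1 ≤ a.1 → b.2 ≤ a.2 → b ∈ A)
    (h1 : ∃ a ∈ A, ∀ b ∈ A, b.1 ≤ a.1)
    (h2 : ∃ a ∈ A, ∀ b ∈ A, b.2 ≤ a.2) :
    sSup {r : ℝ | ∃ a ∈ A, r = min a.1 a.2}
      = sInf {r : ℝ | ∃ α ∈ Set.Icc (0:ℝ) 1,
          r = sSup {s : ℝ | ∃ a ∈ A, s = α * a.1 + (1 - α) * a.2}} := by
  obtain ⟨a1, ha1A, ha1⟩ := h1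
  obtain ⟨a2, ha2A, ha2⟩ := h2
  obtain ⟨a0, ha0⟩ := hne
  set Smin := {r : ℝ | ∃ a ∈ A, r = min a.1 a.2} with hSmin
  set T := {r : ℝ | ∃ α ∈ Set.Icc (0:ℝ) 1,
      r = sSup {s : ℝ | ∃ a ∈ A, s = α * a.1 + (1 - α) * a.2}} with hT
  have hSminne : Smin.Nonempty := ⟨min a0.1 a0.2, a0, ha0, rfl⟩
  have hSminbdd : BddAbove Smin := by
    refine ⟨a1.1, ?_⟩
    rintro r ⟨a, haA, rfl⟩
    exact le_trans (min_le_left _ _) (ha1 a haA)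
  set v := sSup Smin with hv
  -- inner sets are nonempty and bounded above
  have hinne : ∀ α : ℝ, ({s : ℝ | ∃ a ∈ A, s = α * a.1 + (1 - α) * a.2}).Nonempty :=
    fun α => ⟨α * a0.1 + (1 - α) * a0.2, a0, ha0, rfl⟩
  have hinbdd : ∀ α ∈ Set.Icc (0:ℝ) 1,
      BddAbove {s : ℝ | ∃ a ∈ A, s = α * a.1 + (1 - α) * a.2} := by
    rintro α ⟨hα0, hα1⟩
    refine ⟨α * a1.1 + (1 - α) * a2.2, ?_⟩
    rintro s ⟨a, haA, rfl⟩
    have := ha1 a haA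
    have := ha2 a haA
    nlinarith
  -- v is a lower bound of T
  have hlb : ∀ r ∈ T, v ≤ r := by
    rintro r ⟨α, hαI, rfl⟩
    refine csSup_le hSminne ?_
    rintro r ⟨a, haA, rfl⟩
    have hle : min a.1 a.2 ≤ α * a.1 + (1 - α) * a.2 := by
      obtain ⟨hα0, hα1⟩ := hαI
      rcases le_total a.1 a.2 with h | h
      · rw [min_eq_left h]; nlinarith
      · rw [min_eq_right h]; nlinarith
    exact hle.trans (le_csSup (hinbdd α hαI) ⟨a, haA, rfl⟩)
  have hTne : T.Nonempty := ⟨_, 0, ⟨le_refl 0, zero_le_one⟩, rfl⟩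
  have hTbdd : BddBelow T := ⟨v, hlb⟩
  -- separation: quadrant Q disjoint from A
  set Q := (Set.Ioi v) ×ˢ (Set.Ioi v) with hQ
  have hdisj : Disjoint Q A := by
    rw [Set.disjoint_left]
    rintro p ⟨hp1, hp2⟩ hpA
    have : min p.1 p.2 ≤ v := le_csSup hSminbdd ⟨p, hpA, rfl⟩
    simp only [Set.mem_Ioi] at hp1 hp2
    rcases le_total p.1 p.2 with h | h <;> simp [min_eq_left, min_eq_right, h] at this <;> linarith
  obtain ⟨f, u, hfQ, hfA⟩ := geometric_hahn_banach_open
    ((convex_Ioi v).prod (convex_Ioi v)) (isOpen_Ioi.prod isOpen_Ioi) hconv hdisj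
  set b1 := -f (1, 0) with hb1
  set b2 := -f (0, 1) with hb2
  have hfQ' : ∀ x y : ℝ, v < x → v < y → -(x * b1 + y * b2) < u := by
    intro x y hx hy
    have := hfQ (x, y) ⟨hx, hy⟩
    rw [clm_eval_R2] at this
    simp only at this
    simp only [hb1, hb2]
    linarith
  have hfA' : ∀ a ∈ A, b1 * a.1 + b2 * a.2 ≤ -u := by
    intro a haA
    have := hfA a haA
    rw [clm_eval_R2] at this
    simp only [hb1, hb2]
    linarith
  -- b1, b2 ≥ 0
  have hb1nn : 0 ≤ b1 := by
    by_contra h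
    push_neg at h
    set t := max (v + 1) ((u + (v + 1) * b2) / (-b1) + 1) with ht
    have ht1 : v < t := lt_of_lt_of_le (by linarith) (le_max_left _ _)
    have ht2 : (u + (v + 1) * b2) / (-b1) + 1 ≤ t := le_max_right _ _
    have hkey := hfQ' t (v + 1) ht1 (by linarith)
    have : (u + (v + 1) * b2) / (-b1) < t := by linarith
    rw [div_lt_iff₀ (by linarith : (0:ℝ) < -b1)] at this
    nlinarith
  have hb2nn : 0 ≤ b2 := by
    by_contra h
    push_neg at h
    set t := max (v + 1) ((u + (v + 1) * b1) / (-b2) + 1) with ht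
    have ht1 : v < t := lt_of_lt_of_le (by linarith) (le_max_left _ _)
    have ht2 : (u + (v + 1) * b1) / (-b2) + 1 ≤ t := le_max_right _ _
    have hkey := hfQ' (v + 1) t (by linarith) ht1
    have : (u + (v + 1) * b1) / (-b2) < t := by linarith
    rw [div_lt_iff₀ (by linarith : (0:ℝ) < -b2)] at this
    nlinarith
  have hSpos : 0 < b1 + b2 := by
    rcases (lt_or_eq_of_le hb1nn) with h | h
    · linarith
    rcases (lt_or_eq_of_le hb2nn) with h' | h'
    · linarith
    exfalso
    have hq := hfQ' (v + 1) (v + 1) (by linarith) (by linarith)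
    have ha := hfA' a0 ha0
    rw [← h, ← h'] at hq ha
    simp at hq ha
    linarith
  -- -u ≤ v * (b1 + b2)
  have hvu : -u ≤ v * (b1 + b2) := by
    by_contra h
    push_neg at h
    set ε := (-u - v * (b1 + b2)) / (2 * (b1 + b2)) with hε
    have hεpos : 0 < ε := by
      apply div_pos (by linarith) (by linarith)
    have := hfQ' (v + ε) (v + ε) (by linarith) (by linarith)
    have hεeq : ε * (b1 + b2) = (-u - v * (b1 + b2)) / 2 := by
      rw [hε, div_mul_eq_mul_div, div_eq_div_iff (ne_of_gt (by linarith)) (by norm_num)]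
      ring
    have hexp : -((v + ε) * b1 + (v + ε) * b2) = -(v * (b1 + b2)) - ε * (b1 + b2) := by ring
    rw [hexp, hεeq] at this
    clear_value v b1 b2 ε
    linarith
  -- the minimizing α
  set S := b1 + b2 with hS
  set α₀ := b1 / S with hα₀
  have hα₀I : α₀ ∈ Set.Icc (0:ℝ) 1 := by
    constructor
    · exact div_nonneg hb1nn (le_of_lt hSpos)
    · rw [div_le_one hSpos]; linarith
  have h1mα : 1 - α₀ = b2 / S := by
    rw [hα₀, eq_div_iff (ne_of_gt hSpos), sub_mul, div_mul_cancel₀ _ (ne_of_gt hSpos)]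
    linarith
  -- M(α₀) ≤ v
  have hMle : sSup {s : ℝ | ∃ a ∈ A, s = α₀ * a.1 + (1 - α₀) * a.2} ≤ v := by
    refine csSup_le (hinne α₀) ?_
    rintro s ⟨a, haA, rfl⟩
    have hfa := hfA' a haA
    rw [h1mα, hα₀]
    rw [div_mul_eq_mul_div, div_mul_eq_mul_div, ← add_div, div_le_iff₀ hSpos]
    nlinarith
  refine le_antisymm (le_csInf hTne hlb) ?_
  calc sInf T ≤ sSup {s : ℝ | ∃ a ∈ A, s = α₀ * a.1 + (1 - α₀) * a.2} :=
        csInf_le hTbdd ⟨α₀, hα₀I, rfl⟩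
    _ ≤ v := hMle
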